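/- arXiv:1410.5276 — 5 statements merged into one kernel-verified Lean document; each statement's English description precedes it below -/
import Mathlib

section
/- Let G be a group, H a complex inner product space, U : G →* (H →ₗᵢ[ℂ] H) a unitary representation, I a type equipped with a G-action, and (W_i)_{i∈I} a family of pairwise orthogonal subspaces of H such that U_f maps W_i into W_{f·i} for all f ∈ G and i ∈ I. Fix i₀ ∈ I, let T be a subgroup of G contained in the stabilizer of i₀, with U_t Ψ = Ψ for all t ∈ T, where Ψ ∈ W_{i₀}, and assume T has finite index in the stabilizer Stab_G(i₀). Then for every finite subset F ⊆ I and every Ψ' lying in the (algebraic) sum of the subspaces W_j, j ∈ F, the set of left cosets [f] ∈ G ⧸ T for which ⟪U_fΨ, Ψ'⟫ ≠ 0 is finite. -/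
/-- Only finitely many cosets `[f] ∈ G ⧸ T` give a nonzero matrix element
`⟪U_f Ψ, Ψ'⟫` when `Ψ` lies in a subspace `W i₀` of a pairwise-orthogonal,
`G`-covariant family of subspaces, `T` has finite index in the stabilizer of `i₀`,
and `Ψ'` lies in a finite algebraic sum of the subspaces. -/
theorem stmt_1 {G H I : Type*} [Group G] [NormedAddCommGroup H] [InnerProductSpace ℂ H]
    [MulAction G I]
    (U : G →* (H ≃ₗᵢ[ℂ] H)) (W : I → Submodule ℂ H)
    (horth : ∀ i j : I, i ≠ j → ∀ v ∈ W i, ∀ w ∈ W j, inner (𝕜 := ℂ) v w = 0)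
    (hmap : ∀ (f : G) (i : I), ∀ v ∈ W i, (U f) v ∈ W (f • i))
    (i₀ : I) (T : Subgroup G) (hT : T ≤ MulAction.stabilizer G i₀)
    (hfin : (T.subgroupOf (MulAction.stabilizer G i₀)).FiniteIndex)
    (Ψ : H) (hΨW : Ψ ∈ W i₀) (hΨ : ∀ t ∈ T, U t Ψ = Ψ) :
    ∀ (F : Finset I) (Ψ' : H), Ψ' ∈ (⨆ j ∈ F, W j) →
      {q : G ⧸ T | ∃ f : G, QuotientGroup.mk f = q ∧
        inner (𝕜 := ℂ) ((U f) Ψ) Ψ' ≠ 0}.Finite := by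
  intro F Ψ' hΨ'
  classical
  -- the map `[f] ↦ f • i₀` is well-defined on `G ⧸ T`
  have hwd : ∀ a b : G, @Setoid.r G (QuotientGroup.leftRel T) a b → a • i₀ = b • i₀ := by
    intro a b hab
    rw [QuotientGroup.leftRel_apply] at hab
    have hst : (a⁻¹ * b) • i₀ = i₀ := MulAction.mem_stabilizer_iff.mp (hT hab)
    calc a • i₀ = a • (a⁻¹ * b) • i₀ := by rw [hst]
      _ = b • i₀ := by rw [smul_smul, mul_inv_cancel_left]
  set φ : G ⧸ T → I := fun q => Quotient.liftOn' q (fun f => f • i₀) hwd with hφ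
  have hφmk : ∀ f : G, φ (QuotientGroup.mk f) = f • i₀ := fun f => rfl
  -- if `f • i₀ ∉ F` then the matrix element vanishes
  have hvanish : ∀ f : G, f • i₀ ∉ F → inner (𝕜 := ℂ) ((U f) Ψ) Ψ' = 0 := by
    intro f hf
    have hker : (⨆ j ∈ F, W j) ≤ LinearMap.ker (innerSL ℂ ((U f) Ψ) : H →ₗ[ℂ] ℂ) := by
      refine iSup₂_le fun j hj => fun w hw => ?_
      rw [LinearMap.mem_ker]
      exact horth (f • i₀) j (fun h => hf (h ▸ hj)) _ (hmap f i₀ Ψ hΨW) w hw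
    exact LinearMap.mem_ker.mp (hker hΨ')
  -- fibers of φ are finite
  have hfiber : ∀ i : I, {q : G ⧸ T | φ q = i}.Finite := by
    intro i
    rcases Set.eq_empty_or_nonempty {q : G ⧸ T | φ q = i} with he | ⟨q₀, hq₀⟩
    · simp [he]
    · set f₀ : G := q₀.out with hf₀def
      have hout : ∀ q : G ⧸ T, φ q = q.out • i₀ := by
        intro q
        conv_lhs => rw [← QuotientGroup.out_eq' q]
        exact hφmk _
      have hf₀ : f₀ • i₀ = i := by rw [← hout q₀]; exact hq₀
      have hfinq : Finite ((MulAction.stabilizer G i₀) ⧸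
          T.subgroupOf (MulAction.stabilizer G i₀)) :=
        Subgroup.finite_quotient_of_finiteIndex
      rw [← Set.finite_coe_iff]
      have hmem : ∀ q : {q : G ⧸ T // φ q = i},
          f₀⁻¹ * (q : G ⧸ T).out ∈ MulAction.stabilizer G i₀ := by
        rintro ⟨q, hq⟩
        rw [MulAction.mem_stabilizer_iff, mul_smul]
        have : q.out • i₀ = i := by rw [← hout q]; exact hq
        rw [this, ← hf₀, inv_smul_smul]
      refine Finite.of_injective
        (fun q => (QuotientGroup.mk ⟨f₀⁻¹ * (q : G ⧸ T).out, hmem q⟩ :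
          (MulAction.stabilizer G i₀) ⧸ T.subgroupOf (MulAction.stabilizer G i₀))) ?_
      rintro ⟨a, ha⟩ ⟨b, hb⟩ hab
      rw [QuotientGroup.eq] at hab
      rw [Subgroup.mem_subgroupOf] at hab
      simp only [Subgroup.coe_mul, Subgroup.coe_inv, mul_inv_rev, inv_inv] at hab
      have : a.out⁻¹ * b.out ∈ T := by
        convert hab using 1
        group
      have : (QuotientGroup.mk a.out : G ⧸ T) = QuotientGroup.mk b.out :=
        QuotientGroup.eq.mpr this
      ext
      show a = b
      rw [← QuotientGroup.out_eq' a, ← QuotientGroup.out_eq' b]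
      exact this
  -- the nonzero set is contained in a finite union of fibers
  refine Set.Finite.subset (Set.Finite.biUnion F.finite_toSet fun i _ => hfiber i) ?_
  rintro q ⟨f, rfl, hne⟩
  have hfF : f • i₀ ∈ F := by
    by_contra hc
    exact hne (hvanish f hc)
  exact Set.mem_biUnion hfF (hφmk f)
end

section
/- Let G be a group, H a complex inner product space, U : G →* (H →ₗᵢ[ℂ] H) a unitary representation, and T ≤ S ≤ G subgroups with T of finite index n in S. Let Ψ, Ψ' ∈ H satisfy U_sΨ = Ψ and U_sΨ' = Ψ' for all s ∈ S, and suppose ⟪U_fΨ, Ψ'⟫ = 0 for every f ∈ G with f ∉ S. Then the function [f] ↦ ⟪U_fΨ, Ψ'⟫ on G ⧸ T has finite support and ∑ᶠ_{[f] ∈ G⧸T} ⟪U_fΨ, Ψ'⟫ = n · ⟪Ψ, Ψ'⟫. -/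
/-- If `Ψ, Ψ'` are fixed by a subgroup `S`, `T ≤ S` has finite index `n` in `S`, and
`⟪U_f Ψ, Ψ'⟫ = 0` for `f ∉ S`, then the averaged pairing over `G ⧸ T` is a finite sum
equal to `n ⟪Ψ, Ψ'⟫`. -/
theorem stmt_5 {G H : Type*} [Group G] [NormedAddCommGroup H] [InnerProductSpace ℂ H]
    (U : G →* (H ≃ₗᵢ[ℂ] H)) (T S : Subgroup G) (hTS : T ≤ S) (n : ℕ)
    (hn : T.relIndex S = n) (hn0 : n ≠ 0)
    (Ψ Ψ' : H) (hΨ : ∀ s ∈ S, U s Ψ = Ψ) (hΨ' : ∀ s ∈ S, U s Ψ' = Ψ')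
    (hvanish : ∀ f : G, f ∉ S → inner (𝕜 := ℂ) ((U f) Ψ) Ψ' = 0) :
    (Function.support fun q : G ⧸ T =>
        inner (𝕜 := ℂ) ((U (Quotient.out q)) Ψ) Ψ').Finite ∧
    (∑ᶠ q : G ⧸ T, inner (𝕜 := ℂ) ((U (Quotient.out q)) Ψ) Ψ') =
      (n : ℂ) * inner (𝕜 := ℂ) Ψ Ψ' := by
  classical
  set c : ℂ := inner (𝕜 := ℂ) Ψ Ψ' with hc
  set f : G ⧸ T → ℂ := fun q => inner (𝕜 := ℂ) ((U (Quotient.out q)) Ψ) Ψ' with hf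
  have key : ∀ q : G ⧸ T, f q = if Quotient.out q ∈ S then c else 0 := by
    intro q
    by_cases h : Quotient.out q ∈ S
    · simp only [hf, h, if_pos, hΨ _ h, hc]
    · simp only [hf, h, if_neg, not_false_iff]
      exact hvanish _ h
  -- the map from the relative quotient
  let φ : S ⧸ T.subgroupOf S → G ⧸ T :=
    Quotient.map' (fun s => (s : G)) (fun a b hab => by
      rw [QuotientGroup.leftRel_apply] at hab ⊢
      simpa [Subgroup.mem_subgroupOf] using hab)
  have hφmk : ∀ s : S, φ (Quotient.mk'' s) = QuotientGroup.mk (s : G) := fun s => rfl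
  have hφinj : Function.Injective φ := by
    intro a b
    induction a using Quotient.inductionOn' with | h x =>
    induction b using Quotient.inductionOn' with | h y =>
    intro hxy
    rw [hφmk, hφmk, QuotientGroup.eq] at hxy
    apply Quotient.sound'
    rw [QuotientGroup.leftRel_apply]
    simpa [Subgroup.mem_subgroupOf] using hxy
  have hrange : Set.range φ = {q : G ⧸ T | Quotient.out q ∈ S} := by
    ext q
    constructor
    · rintro ⟨x, rfl⟩
      induction x using Quotient.inductionOn' with | h s =>
      rw [hφmk]
      have h1 : (QuotientGroup.mk (Quotient.out (QuotientGroup.mk (s : G) : G ⧸ T)) :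
          G ⧸ T) = QuotientGroup.mk (s : G) := Quotient.out_eq _
      rw [QuotientGroup.eq] at h1
      have : (Quotient.out (QuotientGroup.mk (s : G) : G ⧸ T))⁻¹ * (s : G) ∈ S := hTS h1
      have := S.mul_mem this (S.inv_mem s.2)
      simpa using S.inv_mem this
    · intro hq
      exact ⟨Quotient.mk'' ⟨Quotient.out q, hq⟩, by rw [hφmk]; exact Quotient.out_eq q⟩
  have hfinQ : Finite (S ⧸ T.subgroupOf S) := by
    apply Nat.finite_of_card_ne_zero
    have : Nat.card (S ⧸ T.subgroupOf S) = T.relIndex S := rfl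
    rw [this, hn]; exact hn0
  have hA : ({q : G ⧸ T | Quotient.out q ∈ S} : Set (G ⧸ T)).Finite := by
    rw [← hrange]; exact Set.finite_range φ
  have hsupp : Function.support f ⊆ {q : G ⧸ T | Quotient.out q ∈ S} := by
    intro q hq
    by_contra h
    rw [Set.mem_setOf_eq] at h
    exact hq (by rw [key q, if_neg h])
  have hfin : (Function.support f).Finite := hA.subset hsupp
  refine ⟨hfin, ?_⟩
  by_cases hc0 : c = 0
  · have : f = 0 := by
      funext q
      rw [key q, hc0]; simp
    rw [this, hc0, mul_zero]
    exact finsum_zero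
  · have hsuppeq : Function.support f = {q : G ⧸ T | Quotient.out q ∈ S} := by
      apply hsupp.antisymm
      intro q hq
      rw [Set.mem_setOf_eq] at hq
      rw [Function.mem_support, key q, if_pos hq]
      exact hc0
    have hcard : Nat.card {q : G ⧸ T | Quotient.out q ∈ S} = n := by
      rw [← hrange, Nat.card_range_of_injective hφinj, ← hn]
      rfl
    rw [finsum_eq_sum f hfin]
    have hconst : ∀ q ∈ hfin.toFinset, f q = c := by
      intro q hq
      rw [Set.Finite.mem_toFinset] at hq
      have := hsupp hq
      rw [Set.mem_setOf_eq] at this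
      rw [key q, if_pos this]
    rw [Finset.sum_congr rfl hconst, Finset.sum_const]
    have : hfin.toFinset.card = n := by
      rw [← Set.ncard_eq_toFinset_card _ hfin, ← Nat.card_coe_set_eq, hsuppeq, hcard]
    rw [this, nsmul_eq_mul]
end

section
/- Let G be a group, H a complex inner product space, U : G →* (H →ₗᵢ[ℂ] H) a unitary representation, and T ≤ S ≤ G subgroups with T of finite index n ≥ 1 in S. Let Ψ ∈ H satisfy U_sΨ = Ψ for all s ∈ S, and suppose ⟪U_fΨ, Ψ⟫ = 0 for every f ∈ G with f ∉ S. Then ∑ᶠ_{[f] ∈ G⧸T} ⟪U_fΨ, Ψ⟫ = n · ‖Ψ‖² ; in particular this sum is a nonnegative real number, and it vanishes if and only if Ψ = 0. -/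
open Set Function

/-- Positivity of the averaged norm: under the assumptions of the unitary-embedding lemma,
`∑ᶠ_{[f] ∈ G⧸T} ⟪U_f Ψ, Ψ⟫ = n ‖Ψ‖²`, a nonnegative real number vanishing iff `Ψ = 0`. -/
theorem stmt_6 {G H : Type*} [Group G] [NormedAddCommGroup H] [InnerProductSpace ℂ H]
    (U : G →* (H ≃ₗᵢ[ℂ] H)) (T S : Subgroup G) (hTS : T ≤ S) (n : ℕ)
    (hn : T.relIndex S = n) (hn1 : 1 ≤ n)
    (Ψ : H) (hΨ : ∀ s ∈ S, U s Ψ = Ψ)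
    (hvanish : ∀ f : G, f ∉ S → inner (𝕜 := ℂ) ((U f) Ψ) Ψ = 0) :
    ((∑ᶠ q : G ⧸ T, inner (𝕜 := ℂ) ((U (Quotient.out q)) Ψ) Ψ) =
        (n : ℂ) * ((‖Ψ‖ ^ 2 : ℝ) : ℂ)) ∧
    (((∑ᶠ q : G ⧸ T, inner (𝕜 := ℂ) ((U (Quotient.out q)) Ψ) Ψ) : ℂ).re ≥ 0) ∧
    (((∑ᶠ q : G ⧸ T, inner (𝕜 := ℂ) ((U (Quotient.out q)) Ψ) Ψ) : ℂ).im = 0) ∧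
    ((∑ᶠ q : G ⧸ T, inner (𝕜 := ℂ) ((U (Quotient.out q)) Ψ) Ψ) = 0 ↔ Ψ = 0) := by
  have hcard : Nat.card (S ⧸ T.subgroupOf S) = n := hn
  have hfin : Finite (S ⧸ T.subgroupOf S) := by
    refine Nat.finite_of_card_ne_zero ?_
    rw [hcard]; omega
  -- the natural injection S ⧸ T.subgroupOf S → G ⧸ T
  set g : S ⧸ T.subgroupOf S → G ⧸ T :=
    Quotient.map' Subtype.val (fun a b hab => by
      simpa [QuotientGroup.leftRel_apply, Subgroup.mem_subgroupOf] using hab) with hg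
  have hginj : Injective g := by
    intro a b
    induction a using Quotient.inductionOn'
    induction b using Quotient.inductionOn'
    intro hab
    rw [hg, Quotient.map'_mk'', Quotient.map'_mk''] at hab
    rw [Quotient.eq''] at hab ⊢
    rw [QuotientGroup.leftRel_apply] at hab ⊢
    simpa [Subgroup.mem_subgroupOf] using hab
  have hrange : ∀ q : G ⧸ T, q ∈ range g ↔ (Quotient.out q) ∈ S := by
    intro q
    constructor
    · rintro ⟨a, rfl⟩
      induction a using Quotient.inductionOn' with
      | h s =>
        have h1 : g (Quotient.mk'' s) = QuotientGroup.mk (s : G) := rfl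
        have h2 : (QuotientGroup.mk (s : G) : G ⧸ T) = QuotientGroup.mk
            (Quotient.out (g (Quotient.mk'' s))) := by
          rw [← h1, QuotientGroup.out_eq']
        rw [QuotientGroup.eq] at h2
        have := hTS h2
        have : (s : G) * ((s : G)⁻¹ * Quotient.out (g (Quotient.mk'' s))) ∈ S :=
          S.mul_mem s.2 this
        simpa [mul_assoc] using this
    · intro hq
      refine ⟨Quotient.mk'' ⟨Quotient.out q, hq⟩, ?_⟩
      show QuotientGroup.mk (Quotient.out q) = q
      exact QuotientGroup.out_eq' q
  have hfun : (fun q : G ⧸ T => inner (𝕜 := ℂ) ((U (Quotient.out q)) Ψ) Ψ) =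
      Set.indicator (range g) (fun _ => ((‖Ψ‖ ^ 2 : ℝ) : ℂ)) := by
    funext q
    by_cases hq : Quotient.out q ∈ S
    · rw [Set.indicator_of_mem ((hrange q).mpr hq)]
      rw [hΨ _ hq]
      rw [inner_self_eq_norm_sq_to_K]
      norm_cast
    · rw [Set.indicator_of_notMem (fun h => hq ((hrange q).mp h))]
      exact hvanish _ hq
  have key : (∑ᶠ q : G ⧸ T, inner (𝕜 := ℂ) ((U (Quotient.out q)) Ψ) Ψ) =
      (n : ℂ) * ((‖Ψ‖ ^ 2 : ℝ) : ℂ) := by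
    rw [hfun]
    rw [← finsum_mem_def]
    rw [finsum_mem_range hginj]
    haveI : Fintype (S ⧸ T.subgroupOf S) := Fintype.ofFinite _
    rw [finsum_eq_sum_of_fintype, Finset.sum_const, nsmul_eq_mul]
    congr 1
    rw [← hcard, Nat.card_eq_fintype_card, Finset.card_univ]
  have key' : (∑ᶠ q : G ⧸ T, inner (𝕜 := ℂ) ((U (Quotient.out q)) Ψ) Ψ) =
      (((n * ‖Ψ‖ ^ 2 : ℝ)) : ℂ) := by rw [key]; push_cast; ring
  refine ⟨key, ?_, ?_, ?_⟩
  · rw [key', Complex.ofReal_re]; positivity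
  · rw [key', Complex.ofReal_im]
  · rw [key]
    constructor
    · intro h
      have hnz : (n : ℂ) ≠ 0 := Nat.cast_ne_zero.mpr (by omega)
      have : ((‖Ψ‖ ^ 2 : ℝ) : ℂ) = 0 := by
        rcases mul_eq_zero.mp h with h' | h'
        · exact absurd h' hnz
        · exact h'
      have : ‖Ψ‖ ^ 2 = 0 := by exact_mod_cast this
      have : ‖Ψ‖ = 0 := by nlinarith [norm_nonneg Ψ]
      exact norm_eq_zero.mp this
    · intro h; simp [h]
end

section
/- Let G be a group, H a complex inner product space, U : G →* (H →ₗᵢ[ℂ] H) a unitary representation, T ≤ G a subgroup, and Ψ, Ψ' elements of H with U_tΨ = Ψ and U_tΨ' = Ψ' for all t ∈ T. Fix f₀ ∈ G and let T' := f₀ T f₀⁻¹ be the conjugate subgroup. Then: (i) U_{t'}(U_{f₀}Ψ) = U_{f₀}Ψ for every t' ∈ T'; and (ii) assuming the relevant functions on coset spaces have finite support, ∑ᶠ_{[g] ∈ G⧸T'} ⟪U_g(U_{f₀}Ψ), U_{f₀}Ψ'⟫ = ∑ᶠ_{[f] ∈ G⧸T} ⟪U_fΨ, Ψ'⟫. In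 other words, the induced map η(Ψ) ↦ η(U_{f₀}Ψ) preserves the averaged scalar products. -/
/-- The action of `U_{f₀}` on averaged states: `U_{f₀}Ψ` is fixed by the conjugate
subgroup `T' = f₀ T f₀⁻¹`, and the averaged scalar product over `G ⧸ T'` of the
translated vectors equals the averaged scalar product over `G ⧸ T` of the original ones. -/
theorem stmt_8 {G H : Type*} [Group G] [NormedAddCommGroup H] [InnerProductSpace ℂ H]
    (U : G →* (H ≃ₗᵢ[ℂ] H)) (T : Subgroup G) (Ψ Ψ' : H)
    (hΨ : ∀ t ∈ T, U t Ψ = Ψ) (hΨ' : ∀ t ∈ T, U t Ψ' = Ψ')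
    (f₀ : G) (T' : Subgroup G)
    (hT' : T' = Subgroup.map (MulAut.conj f₀).toMonoidHom T) :
    (∀ t' ∈ T', U t' ((U f₀) Ψ) = (U f₀) Ψ) ∧
    ((Function.support fun q : G ⧸ T' =>
        inner (𝕜 := ℂ) ((U (Quotient.out q)) ((U f₀) Ψ)) ((U f₀) Ψ')).Finite →
      (Function.support fun q : G ⧸ T =>
        inner (𝕜 := ℂ) ((U (Quotient.out q)) Ψ) Ψ').Finite →
      (∑ᶠ q : G ⧸ T', inner (𝕜 := ℂ) ((U (Quotient.out q)) ((U f₀) Ψ)) ((U f₀) Ψ')) =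
        ∑ᶠ q : G ⧸ T, inner (𝕜 := ℂ) ((U (Quotient.out q)) Ψ) Ψ') := by
  -- membership in the conjugate subgroup
  have hmem : ∀ x : G, x ∈ T' ↔ f₀⁻¹ * x * f₀ ∈ T := by
    intro x
    subst hT'
    constructor
    · rintro ⟨t, ht, rfl⟩
      simpa [MulAut.conj_apply, mul_assoc] using ht
    · intro h
      exact ⟨f₀⁻¹ * x * f₀, h, by simp [MulAut.conj_apply]; group⟩
  -- `U` of a product acts as composition
  have hUmul : ∀ (a b : G) (x : H), U (a * b) x = U a (U b x) := by
    intro a b x; rw [map_mul]; rfl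
  -- the basic averaged function is constant on left `T`-cosets
  have hF : ∀ a b : G, a⁻¹ * b ∈ T →
      (inner (𝕜 := ℂ) (U a Ψ) Ψ' : ℂ) = inner (𝕜 := ℂ) (U b Ψ) Ψ' := by
    intro a b h
    have hb : b = a * (a⁻¹ * b) := by group
    rw [hb, hUmul, hΨ _ h]
  constructor
  · -- invariance of `U f₀ Ψ` under the conjugate subgroup
    intro t' ht'
    have h1 : f₀⁻¹ * t' * f₀ ∈ T := (hmem t').mp ht'
    have h2 : t' * f₀ = f₀ * (f₀⁻¹ * t' * f₀) := by group
    rw [← hUmul, h2, hUmul, hΨ _ h1]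
  · intro _ _
    -- the bijection `G ⧸ T' → G ⧸ T`, `q ↦ ⟦f₀⁻¹ * q.out * f₀⟧`
    set e : G ⧸ T' → G ⧸ T := fun q => QuotientGroup.mk (f₀⁻¹ * q.out * f₀) with he
    have hinj : Function.Injective e := by
      intro q₁ q₂ h
      rw [he] at h
      have h' : (f₀⁻¹ * q₁.out * f₀)⁻¹ * (f₀⁻¹ * q₂.out * f₀) ∈ T := QuotientGroup.eq.mp h
      rw [← QuotientGroup.out_eq' q₁, ← QuotientGroup.out_eq' q₂]
      refine QuotientGroup.eq.mpr ?_
      rw [hmem]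
      have : f₀⁻¹ * (q₁.out⁻¹ * q₂.out) * f₀ =
          (f₀⁻¹ * q₁.out * f₀)⁻¹ * (f₀⁻¹ * q₂.out * f₀) := by group
      rw [this]; exact h'
    have hsurj : Function.Surjective e := by
      intro p
      refine ⟨QuotientGroup.mk (f₀ * p.out * f₀⁻¹), ?_⟩
      obtain ⟨t, ht⟩ := QuotientGroup.mk_out_eq_mul T' (f₀ * p.out * f₀⁻¹)
      have htT : f₀⁻¹ * (t : G) * f₀ ∈ T := (hmem t).mp t.2
      rw [he]
      simp only
      rw [ht]
      have : f₀⁻¹ * (f₀ * p.out * f₀⁻¹ * (t : G)) * f₀ =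
          p.out * (f₀⁻¹ * (t : G) * f₀) := by group
      rw [this]
      calc QuotientGroup.mk (p.out * (f₀⁻¹ * (t : G) * f₀))
          = QuotientGroup.mk p.out := by
            refine QuotientGroup.eq.mpr ?_
            have h2 : (p.out * (f₀⁻¹ * (t : G) * f₀))⁻¹ * p.out =
                (f₀⁻¹ * (t : G) * f₀)⁻¹ := by group
            rw [h2]; exact T.inv_mem htT
        _ = p := QuotientGroup.out_eq' p
    refine finsum_eq_of_bijective e ⟨hinj, hsurj⟩ ?_
    intro q
    have hc : q.out * f₀ = f₀ * (f₀⁻¹ * q.out * f₀) := by group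
    have step1 : (inner (𝕜 := ℂ) (U q.out ((U f₀) Ψ)) ((U f₀) Ψ') : ℂ)
        = inner (𝕜 := ℂ) (U (f₀⁻¹ * q.out * f₀) Ψ) Ψ' := by
      rw [← hUmul, hc, hUmul]
      exact (U f₀).inner_map_map _ _
    have hcoset : (f₀⁻¹ * q.out * f₀)⁻¹ * (e q).out ∈ T := by
      refine QuotientGroup.eq.mp ?_
      rw [QuotientGroup.out_eq' (e q), he]
    rw [step1]
    exact hF _ _ hcoset
end

section
/- Let G be a group, H a complex Hilbert space, U : G →* (H →ₗᵢ[ℂ] H) a unitary representation, T ≤ G a subgroup, and Ψ ∈ H with U_tΨ = Ψ for all t ∈ T. Let A : H →L[ℂ] H be a bounded linear operator commuting with the representation: A ∘ U_f = U_f ∘ A for every f ∈ G. Then the adjoint A† also commutes with U_f for every f ∈ G, the vector A†Ψ satisfies U_t(A†Ψ) = A†Ψ for all t ∈ T, and for every Ψ' ∈ H (assuming the function [f] ↦ ⟪U_fΨ, AΨ'⟫ on G⧸T has finite support) one has ∑ᶠ_{[f] ∈ G⧸T} ⟪U_f(A†Ψ), Ψ'⟫ = ∑ᶠ_{[f] ∈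 G⧸T} ⟪U_fΨ, AΨ'⟫ ; i.e. the dual operator maps the averaged state η(Ψ) to the averaged state η(A†Ψ). -/
/-- Lifting an operator commuting with the representation to the averaged states:
the adjoint `A†` also commutes with the representation, preserves the `T`-invariance of
`Ψ`, and the dual action satisfies `η(A†Ψ)(Ψ') = η(Ψ)(AΨ')`. -/
theorem stmt_9 {G H : Type*} [Group G] [NormedAddCommGroup H] [InnerProductSpace ℂ H]
    [CompleteSpace H]
    (U : G →* (H ≃ₗᵢ[ℂ] H)) (T : Subgroup G) (Ψ : H)
    (hΨ : ∀ t ∈ T, U t Ψ = Ψ)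
    (A : H →L[ℂ] H)
    (hA : ∀ (f : G) (x : H), A ((U f) x) = (U f) (A x)) :
    (∀ (f : G) (x : H),
        (ContinuousLinearMap.adjoint A) ((U f) x) = (U f) ((ContinuousLinearMap.adjoint A) x)) ∧
    (∀ t ∈ T, U t ((ContinuousLinearMap.adjoint A) Ψ) = (ContinuousLinearMap.adjoint A) Ψ) ∧
    (∀ Ψ' : H,
      (Function.support fun q : G ⧸ T =>
        inner (𝕜 := ℂ) ((U (Quotient.out q)) Ψ) (A Ψ')).Finite →
      (∑ᶠ q : G ⧸ T,
          inner (𝕜 := ℂ) ((U (Quotient.out q)) ((ContinuousLinearMap.adjoint A) Ψ)) Ψ') =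
        ∑ᶠ q : G ⧸ T, inner (𝕜 := ℂ) ((U (Quotient.out q)) Ψ) (A Ψ')) := by
  have hsymm : ∀ (f : G) (z : H), (U f).symm (A z) = A ((U f).symm z) := by
    intro f z
    have := hA f ((U f).symm z)
    rw [(U f).apply_symm_apply] at this
    rw [this, (U f).symm_apply_apply]
  have hcomm : ∀ (f : G) (x : H),
      (ContinuousLinearMap.adjoint A) ((U f) x) = (U f) ((ContinuousLinearMap.adjoint A) x) := by
    intro f x
    apply ext_inner_right ℂ
    intro z
    rw [ContinuousLinearMap.adjoint_inner_left]
    have h1 : (inner ℂ ((U f) x) (A z) : ℂ) = inner ℂ x ((U f).symm (A z)) := by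
      conv_lhs => rw [← (U f).apply_symm_apply (A z)]
      exact (U f).inner_map_map x _
    have h2 : (inner ℂ ((U f) ((ContinuousLinearMap.adjoint A) x)) z : ℂ)
        = inner ℂ ((ContinuousLinearMap.adjoint A) x) ((U f).symm z) := by
      conv_lhs => rw [← (U f).apply_symm_apply z]
      exact (U f).inner_map_map _ _
    rw [h1, h2, ContinuousLinearMap.adjoint_inner_left, hsymm]
  refine ⟨hcomm, ?_, ?_⟩
  · intro t ht
    rw [← hcomm t Ψ, hΨ t ht]
  · intro Ψ' _
    refine finsum_congr fun q => ?_
    rw [← hcomm, ContinuousLinearMap.adjoint_inner_left]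
end
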